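/- Let G be a finite simple graph containing at least one edge. Then the subdivision graph S(G) is edge-regular (for some parameters) if and only if G is 2-regular (every vertex of G has degree 2, i.e., G is a disjoint union of cycles). -/

import Mathlib

open SimpleGraph

def SimpleGraph.IsEdgeRegular {V : Type*} [Fintype V] (G : SimpleGraph V) (n k l : ℕ) : Prop :=
  Fintype.card V = n ∧ (∀ v : V, (G.neighborSet v).ncard = k) ∧
    ∀ u v : V, G.Adj u v → (G.commonNeighbors u v).ncard = l

/-- The subdivision graph of a simple graph: one new vertex in the middle of each edge. -/
def SimpleGraph.subdivision {V : Type*} (G : SimpleGraph V) :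
    SimpleGraph (V ⊕ G.edgeSet) where
  Adj x y := match x, y with
    | Sum.inl v, Sum.inr e => v ∈ (e : Sym2 V)
    | Sum.inr e, Sum.inl v => v ∈ (e : Sym2 V)
    | _, _ => False
  symm := by constructor; rintro (v | e) (w | f) h <;> simp_all
  loopless := by constructor; rintro (v | e) h <;> simp_all

lemma subdiv_adj_inl_inr {V : Type*} (G : SimpleGraph V) (v : V) (e : G.edgeSet) :
    G.subdivision.Adj (Sum.inl v) (Sum.inr e) ↔ v ∈ (e : Sym2 V) := Iff.rfl

lemma ncard_nb_inl {V : Type*} [Fintype V] [DecidableEq V] (G : SimpleGraph V)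
    [DecidableRel G.Adj] (v : V) :
    (G.subdivision.neighborSet (Sum.inl v)).ncard = (G.neighborSet v).ncard := by
  have h1 : G.subdivision.neighborSet (Sum.inl v)
      = Sum.inr '' {e : G.edgeSet | v ∈ (e : Sym2 V)} := by
    ext x
    rcases x with w | e
    · simp [SimpleGraph.neighborSet, SimpleGraph.subdivision]
    · simp [SimpleGraph.neighborSet, SimpleGraph.subdivision]
  have h2 : Subtype.val '' {e : G.edgeSet | v ∈ (e : Sym2 V)} = G.incidenceSet v := by
    ext s
    simp [SimpleGraph.incidenceSet, and_comm]
  have h3 : (G.neighborSet v).ncard = G.degree v := by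
    rw [Set.ncard_eq_toFinset_card']
    simp [SimpleGraph.degree, SimpleGraph.neighborFinset]
  have h4 : (G.incidenceSet v).ncard = G.degree v := by
    rw [Set.ncard_eq_toFinset_card', ← SimpleGraph.incidenceFinset,
      SimpleGraph.card_incidenceFinset_eq_degree]
  have h5 := Set.ncard_image_of_injective {e : G.edgeSet | v ∈ (e : Sym2 V)}
    Subtype.val_injective
  rw [h2] at h5
  rw [h1, Set.ncard_image_of_injective _ Sum.inr_injective, ← h5, h4, h3]

lemma ncard_nb_inr {V : Type*} [Fintype V] [DecidableEq V] (G : SimpleGraph V)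
    [DecidableRel G.Adj] (e : G.edgeSet) :
    (G.subdivision.neighborSet (Sum.inr e)).ncard = 2 := by
  obtain ⟨s, hs⟩ := e
  have h1 : G.subdivision.neighborSet (Sum.inr ⟨s, hs⟩)
      = Sum.inl '' {v : V | v ∈ s} := by
    ext x
    rcases x with w | f
    · simp [SimpleGraph.neighborSet, SimpleGraph.subdivision]
    · simp [SimpleGraph.neighborSet, SimpleGraph.subdivision]
  rw [h1, Set.ncard_image_of_injective _ Sum.inl_injective]
  induction s with
  | h a b =>
    have hab : a ≠ b := (G.mem_edgeSet.mp hs).ne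
    have : {v : V | v ∈ s(a, b)} = {a, b} := by
      ext v; simp [Sym2.mem_iff]
    rw [this, Set.ncard_pair hab]

lemma common_empty {V : Type*} (G : SimpleGraph V) (x y : V ⊕ G.edgeSet)
    (h : G.subdivision.Adj x y) : G.subdivision.commonNeighbors x y = ∅ := by
  rcases x with v | e <;> rcases y with w | f
  · exact absurd h (by simp [SimpleGraph.subdivision])
  · ext z
    rcases z with u | g <;>
      simp [SimpleGraph.commonNeighbors, SimpleGraph.neighborSet, SimpleGraph.subdivision]
  · ext z
    rcases z with u | g <;>
      simp [SimpleGraph.commonNeighbors, SimpleGraph.neighborSet, SimpleGraph.subdivision]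
  · exact absurd h (by simp [SimpleGraph.subdivision])

theorem stmt_16 {V : Type*} [Fintype V] [DecidableEq V] (G : SimpleGraph V) [DecidableRel G.Adj]
    (he : ∃ a b : V, G.Adj a b) :
    (∃ n k l : ℕ, G.subdivision.IsEdgeRegular n k l) ↔
      ∀ v : V, (G.neighborSet v).ncard = 2 := by
  constructor
  · rintro ⟨n, k, l, -, hk, -⟩ v
    obtain ⟨a, b, hab⟩ := he
    have he2 : (⟨s(a, b), G.mem_edgeSet.mpr hab⟩ : G.edgeSet) = _ := rfl
    have hk2 : k = 2 := by
      rw [← hk (Sum.inr ⟨s(a, b), G.mem_edgeSet.mpr hab⟩), ncard_nb_inr]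
    rw [← ncard_nb_inl, hk (Sum.inl v), hk2]
  · intro h2
    refine ⟨Fintype.card (V ⊕ G.edgeSet), 2, 0, rfl, ?_, ?_⟩
    · rintro (v | e)
      · rw [ncard_nb_inl]; exact h2 v
      · exact ncard_nb_inr G e
    · intro x y hxy
      rw [common_empty G x y hxy, Set.ncard_empty]
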